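/- For all nonnegative reals x₁, x₂, x₃, if (x₁+x₂+x₃)⁴ - 8(x₁³x₂ + x₁³x₃ + x₂x₃³) = 0, then x₁ = x₂ = x₃ = 0. -/
import Mathlib


theorem stmt_4 (x₁ x₂ x₃ : ℝ) (h₁ : 0 ≤ x₁) (h₂ : 0 ≤ x₂) (h₃ : 0 ≤ x₃)
    (h : (x₁+x₂+x₃)^4 - 8*(x₁^3*x₂ + x₁^3*x₃ + x₂*x₃^3) = 0) :
    x₁ = 0 ∧ x₂ = 0 ∧ x₃ = 0 := by
  have key : (x₁+x₂+x₃)^4 - 8*(x₁^3*x₂ + x₁^3*x₃ + x₂*x₃^3) =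
      (x₁^2 - 2*x₁*x₂ - 2*x₁*x₃)^2 + (x₃^2 - 2*x₂*x₃)^2 + x₂^4
      + 4*x₁*x₂^3 + 4*x₂^3*x₃ + 4*x₁*x₃^3 + 2*x₁^2*x₂^2 + 2*x₁^2*x₃^2
      + 2*x₂^2*x₃^2 + 4*x₁^2*x₂*x₃ + 12*x₁*x₂^2*x₃ + 12*x₁*x₂*x₃^2 := by ring
  rw [key] at h
  have n1 : (0:ℝ) ≤ 4*x₁*x₂^3 := by positivity
  have n2 : (0:ℝ) ≤ 4*x₂^3*x₃ := by positivity
  have n3 : (0:ℝ) ≤ 4*x₁*x₃^3 := by positivity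
  have n4 : (0:ℝ) ≤ 2*x₁^2*x₂^2 := by positivity
  have n5 : (0:ℝ) ≤ 2*x₁^2*x₃^2 := by positivity
  have n6 : (0:ℝ) ≤ 2*x₂^2*x₃^2 := by positivity
  have n7 : (0:ℝ) ≤ 4*x₁^2*x₂*x₃ := by positivity
  have n8 : (0:ℝ) ≤ 12*x₁*x₂^2*x₃ := by positivity
  have n9 : (0:ℝ) ≤ 12*x₁*x₂*x₃^2 := by positivity
  have s1 := sq_nonneg (x₁^2 - 2*x₁*x₂ - 2*x₁*x₃)
  have s2 := sq_nonneg (x₃^2 - 2*x₂*x₃)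
  have s3 : (0:ℝ) ≤ x₂^4 := by positivity
  have hy : x₂ = 0 := by
    have : x₂^4 = 0 := by linarith
    exact pow_eq_zero_iff (by norm_num) |>.mp this
  subst hy
  have hz : x₃ = 0 := by
    have h4 : x₃^4 = 0 := by nlinarith [sq_nonneg (x₃^2)]
    exact pow_eq_zero_iff (by norm_num) |>.mp h4
  subst hz
  have hx : x₁ = 0 := by
    have h4 : x₁^4 = 0 := by nlinarith [sq_nonneg (x₁^2)]
    exact pow_eq_zero_iff (by norm_num) |>.mp h4
  exact ⟨hx, rfl, rfl⟩
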